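/- arXiv:1707.02650 — 2 statements merged into one kernel-verified Lean document; each statement's English description precedes it below -/
import Mathlib

section
/- Let n = 3k with k > 0 and let a_1,…,a_n be positive integers with ∑ a_i = k·b and b/4 < a_i < b/2 for each i. In the graph G'' (for each i ∈ {1,…,n}: a direct edge (w_{i-1},w_i) with delay a_i, and k−1 zero-delay two-edge routes from w_{i-1} to w_i through intermediate nodes v_i^j; all capacities 1), there exists a feasible integer flow of rate R = k from w_0 to w_n with maximum delay at most b if and only if there exists a partition {A_1,…,A_k} of {a_1,…,a_n} such that ∑_{a_i∈A_j} a_i = b for every j. -/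
/-- A directed network: each edge has a source node, a destination node,
a non-negative integer capacity and a non-negative integer delay. -/
structure Network (V : Type) (E : Type) where
  src : E → V
  dst : E → V
  cap : E → ℕ
  delay : E → ℕ

namespace Network

variable {V E : Type}

/-- `N.IsPath s t p` : the list of edges `p` forms a directed path from `s` to `t`. -/
def IsPath (N : Network V E) : V → V → List E → Prop
  | s, t, [] => s = t
  | s, t, e :: es => N.src e = s ∧ N.IsPath (N.dst e) t es

/-- The delay of a path: the sum of the delays of its edges. -/
def pathDelay (N : Network V E) (p : List E) : ℕ := (p.map N.delay).sum

end Network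

/-- A (path-based) flow from `s` to `t`: a finitely-supported assignment of
non-negative rates to `s`–`t` paths. -/
structure PathFlow {V E : Type} (N : Network V E) (s t : V) where
  f : List E →₀ ℝ
  nonneg : ∀ p, 0 ≤ f p
  isPath : ∀ p ∈ f.support, N.IsPath s t p

namespace PathFlow

variable {V E : Type} [DecidableEq E] {N : Network V E} {s t : V}

/-- Total rate of the flow. -/
noncomputable def totalRate (F : PathFlow N s t) : ℝ := ∑ p ∈ F.f.support, F.f p

/-- Rate carried by edge `e`: the sum of the rates of all paths containing `e`. -/
noncomputable def edgeRate (F : PathFlow N s t) (e : E) : ℝ :=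
  ∑ p ∈ F.f.support, if e ∈ p then F.f p else 0

/-- Feasibility with rate `R`: total rate is `R` and every edge capacity is respected. -/
def Feasible (F : PathFlow N s t) (R : ℝ) : Prop :=
  F.totalRate = R ∧ ∀ e, F.edgeRate e ≤ (N.cap e : ℝ)

/-- The maximum delay over flow-carrying paths. -/
def maxDelay (F : PathFlow N s t) : ℕ := F.f.support.sup N.pathDelay

/-- An integer flow assigns a non-negative integer rate to every path. -/
def IsInteger (F : PathFlow N s t) : Prop := ∀ p, ∃ m : ℕ, F.f p = (m : ℝ)

end PathFlow

/-- Nodes of the 3-partition-reduction graph `G''`: `Sum.inl i` is `w_i` (`i = 0,…,n`),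
`Sum.inr (i, j)` is the intermediate node `v_{i+1}^{j+1}` (`j = 0,…,k-2`). -/
abbrev G3V (n k : ℕ) := Fin (n + 1) ⊕ (Fin n × Fin (k - 1))

/-- Edges of `G''`: `Sum.inl i` is the direct edge `(w_i, w_{i+1})` of delay `a i`;
`Sum.inr (Sum.inl (i, j))` is `(w_i, v_{i+1}^{j+1})` and `Sum.inr (Sum.inr (i, j))` is
`(v_{i+1}^{j+1}, w_{i+1})`, both of delay `0`. All edges have capacity `1`. -/
abbrev G3E (n k : ℕ) := Fin n ⊕ ((Fin n × Fin (k - 1)) ⊕ (Fin n × Fin (k - 1)))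

/-- The graph `G''` reduced from the 3-partition problem: between `w_i` and `w_{i+1}`
there are `k` parallel routes, the direct delay-`(a i)` edge and `k - 1` zero-delay
two-edge routes. -/
def G3 (n k : ℕ) (a : Fin n → ℕ) : Network (G3V n k) (G3E n k) where
  src
    | Sum.inl i => Sum.inl i.castSucc
    | Sum.inr (Sum.inl (i, _j)) => Sum.inl i.castSucc
    | Sum.inr (Sum.inr (i, j)) => Sum.inr (i, j)
  dst
    | Sum.inl i => Sum.inl i.succ
    | Sum.inr (Sum.inl (i, j)) => Sum.inr (i, j)
    | Sum.inr (Sum.inr (i, _j)) => Sum.inl i.succ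
  cap := fun _ => 1
  delay
    | Sum.inl i => a i
    | Sum.inr _ => 0

section Aux

variable {n k : ℕ}

def seg (i : Fin n) : Option (Fin (k - 1)) → List (G3E n k)
  | none => [Sum.inl i]
  | some j => [Sum.inr (Sum.inl (i, j)), Sum.inr (Sum.inr (i, j))]

def canonFrom (c : Fin n → Option (Fin (k - 1))) (m : ℕ) : List (G3E n k) :=
  ((List.finRange n).drop m).flatMap (fun i => seg i (c i))

def canon (c : Fin n → Option (Fin (k - 1))) : List (G3E n k) := canonFrom c 0

lemma canonFrom_ge (c : Fin n → Option (Fin (k - 1))) {m : ℕ} (h : n ≤ m) :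
    canonFrom c m = [] := by
  unfold canonFrom
  rw [List.drop_eq_nil_of_le (by simpa using h)]
  rfl

lemma canonFrom_succ (c : Fin n → Option (Fin (k - 1))) {m : ℕ} (h : m < n) :
    canonFrom c m = seg ⟨m, h⟩ (c ⟨m, h⟩) ++ canonFrom c (m + 1) := by
  have hl : m < (List.finRange n).length := by simpa using h
  unfold canonFrom
  rw [List.drop_eq_getElem_cons hl, List.flatMap_cons]
  have : (List.finRange n)[m] = (⟨m, h⟩ : Fin n) := by
    rw [List.getElem_finRange]; exact Fin.ext rfl
  rw [this]

lemma canonFrom_congr (c c' : Fin n → Option (Fin (k - 1))) :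
    ∀ r m, n - m = r → (∀ j : Fin n, m ≤ j.val → c j = c' j) →
      canonFrom c m = canonFrom c' m := by
  intro r
  induction r with
  | zero => intro m hm _; rw [canonFrom_ge _ (by omega), canonFrom_ge _ (by omega)]
  | succ r ih =>
    intro m hm hcc
    have hlt : m < n := by omega
    rw [canonFrom_succ c hlt, canonFrom_succ c' hlt, hcc ⟨m, hlt⟩ le_rfl,
      ih (m + 1) (by omega) (fun j hj => hcc j (by omega))]

lemma isPath_canonFrom (a : Fin n → ℕ) (c : Fin n → Option (Fin (k - 1))) :
    ∀ r m (h : m + r = n),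
      (G3 n k a).IsPath (Sum.inl ⟨m, by omega⟩) (Sum.inl (Fin.last n)) (canonFrom c m) := by
  intro r
  induction r with
  | zero =>
    intro m h
    rw [canonFrom_ge _ (by omega)]
    show Sum.inl _ = Sum.inl _
    exact congrArg Sum.inl (Fin.ext (by simp [Fin.last]; omega))
  | succ r ih =>
    intro m h
    have hlt : m < n := by omega
    rw [canonFrom_succ c hlt]
    have IH := ih (m + 1) (by omega)
    cases hc : c ⟨m, hlt⟩ with
    | none =>
      simp only [seg, List.cons_append, List.nil_append]
      exact ⟨rfl, IH⟩
    | some j =>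
      simp only [seg, List.cons_append, List.nil_append]
      exact ⟨rfl, rfl, IH⟩

end Aux
section Aux2
variable {n k : ℕ}

lemma path_struct (a : Fin n → ℕ) :
    ∀ (N : ℕ) (p : List (G3E n k)), p.length ≤ N → ∀ (i : Fin (n + 1)),
      (G3 n k a).IsPath (Sum.inl i) (Sum.inl (Fin.last n)) p →
      ∃ c : Fin n → Option (Fin (k - 1)), p = canonFrom c i.val := by
  intro N
  induction N with
  | zero =>
    intro p hp i h
    have hp0 : p = [] := List.eq_nil_of_length_eq_zero (Nat.le_zero.mp hp)
    subst hp0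
    have : Sum.inl (α := Fin (n+1)) (β := Fin n × Fin (k-1)) i = Sum.inl (Fin.last n) := h
    have hi : i = Fin.last n := Sum.inl.inj this
    exact ⟨fun _ => none, (canonFrom_ge _ (by simp [hi, Fin.last])).symm⟩
  | succ N ih =>
    intro p hp i h
    match p, h with
    | [], h =>
      have hi : i = Fin.last n := Sum.inl.inj h
      exact ⟨fun _ => none, (canonFrom_ge _ (by simp [hi, Fin.last])).symm⟩
    | Sum.inl i' :: es, ⟨hsrc, hrest⟩ =>
      have hi : i'.castSucc = i := Sum.inl.inj hsrc
      have hval : (i : ℕ) = (i' : ℕ) := by rw [← hi]; rfl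
      obtain ⟨c, hc⟩ := ih es (by simpa using Nat.le_of_succ_le_succ hp) i'.succ hrest
      have hlt : i.val < n := by rw [hval]; exact i'.isLt
      have hii : (⟨i.val, hlt⟩ : Fin n) = i' := Fin.ext hval
      refine ⟨Function.update c i' none, ?_⟩
      rw [canonFrom_succ _ hlt, hii, Function.update_self]
      have hcongr : canonFrom (Function.update c i' none) (i.val + 1) = canonFrom c (i.val + 1) :=
        canonFrom_congr _ _ _ _ rfl (fun j hj => Function.update_of_ne
          (fun hji => by subst hji; omega) _ _)
      rw [hcongr, seg]
      have hes : es = canonFrom c (i.val + 1) := by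
        rw [hc]; congr 1; rw [Fin.val_succ, hval]
      rw [← hes]; rfl
    | Sum.inr (Sum.inl (i', j)) :: es, ⟨hsrc, hrest⟩ =>
      have hi : i'.castSucc = i := Sum.inl.inj hsrc
      have hval : (i : ℕ) = (i' : ℕ) := by rw [← hi]; rfl
      match es with
      | [] => exact absurd hrest (by simp [Network.IsPath, G3])
      | Sum.inl x :: es2 =>
        obtain ⟨hs2, hrest2⟩ := hrest
        exact absurd hs2 (by simp [G3])
      | Sum.inr (Sum.inl x) :: es2 =>
        obtain ⟨hs2, hrest2⟩ := hrest
        exact absurd hs2 (by simp [G3])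
      | Sum.inr (Sum.inr (i'', j'')) :: es2 =>
        obtain ⟨hs2, hrest2⟩ := hrest
        have hpair : (i'', j'') = (i', j) := Sum.inr.inj hs2
        have hi2 : i'' = i' := congrArg Prod.fst hpair
        have hj2 : j'' = j := congrArg Prod.snd hpair
        subst hi2; subst hj2
        obtain ⟨c, hc⟩ := ih es2 (by simp at hp ⊢; omega) i''.succ hrest2
        have hlt : i.val < n := by rw [hval]; exact i''.isLt
        have hii : (⟨i.val, hlt⟩ : Fin n) = i'' := Fin.ext hval
        refine ⟨Function.update c i'' (some j''), ?_⟩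
        rw [canonFrom_succ _ hlt, hii, Function.update_self]
        have hcongr : canonFrom (Function.update c i'' (some j'')) (i.val + 1)
            = canonFrom c (i.val + 1) :=
          canonFrom_congr _ _ _ _ rfl (fun jj hj => Function.update_of_ne
            (fun hji => by subst hji; omega) _ _)
        rw [hcongr, seg]
        have hes : es2 = canonFrom c (i.val + 1) := by
          rw [hc]; congr 1; rw [Fin.val_succ, hval]
        rw [← hes]; rfl
    | Sum.inr (Sum.inr (i', j)) :: es, ⟨hsrc, hrest⟩ =>
      exact absurd hsrc (by simp [G3])

lemma canon_def (c : Fin n → Option (Fin (k - 1))) :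
    canon c = (List.finRange n).flatMap (fun i => seg i (c i)) := by
  simp [canon, canonFrom]

lemma mem_canon_inl {c : Fin n → Option (Fin (k - 1))} {i : Fin n} :
    (Sum.inl i : G3E n k) ∈ canon c ↔ c i = none := by
  rw [canon_def, List.mem_flatMap]
  constructor
  · rintro ⟨i', _, hmem⟩
    cases h : c i' with
    | none => simp [seg, h] at hmem; subst hmem; exact h
    | some j => simp [seg, h] at hmem
  · intro h; exact ⟨i, List.mem_finRange i, by simp [seg, h]⟩

lemma mem_canon_fst {c : Fin n → Option (Fin (k - 1))} {i : Fin n} {j : Fin (k - 1)} :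
    (Sum.inr (Sum.inl (i, j)) : G3E n k) ∈ canon c ↔ c i = some j := by
  rw [canon_def, List.mem_flatMap]
  constructor
  · rintro ⟨i', _, hmem⟩
    cases h : c i' with
    | none => simp [seg, h] at hmem
    | some j' =>
      simp [seg, h] at hmem
      obtain ⟨hi, hj⟩ := hmem
      subst hi; subst hj; exact h
  · intro h; exact ⟨i, List.mem_finRange i, by simp [seg, h]⟩

lemma mem_canon_snd {c : Fin n → Option (Fin (k - 1))} {i : Fin n} {j : Fin (k - 1)} :
    (Sum.inr (Sum.inr (i, j)) : G3E n k) ∈ canon c ↔ c i = some j := by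
  rw [canon_def, List.mem_flatMap]
  constructor
  · rintro ⟨i', _, hmem⟩
    cases h : c i' with
    | none => simp [seg, h] at hmem
    | some j' =>
      simp [seg, h] at hmem
      obtain ⟨hi, hj⟩ := hmem
      subst hi; subst hj; exact h
  · intro h; exact ⟨i, List.mem_finRange i, by simp [seg, h]⟩

lemma sum_flatMap_map {α β : Type} (d : β → ℕ) (g : α → List β) :
    ∀ l : List α, ((l.flatMap g).map d).sum = (l.map (fun x => ((g x).map d).sum)).sum := by
  intro l; induction l with
  | nil => simp
  | cons x xs ih => simp [List.flatMap_cons, ih]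

lemma pathDelay_canon (a : Fin n → ℕ) (c : Fin n → Option (Fin (k - 1))) :
    (G3 n k a).pathDelay (canon c) = ∑ i ∈ Finset.univ.filter (fun i => c i = none), a i := by
  unfold Network.pathDelay
  rw [canon_def, sum_flatMap_map, ← Fin.sum_univ_def, Finset.sum_filter]
  refine Finset.sum_congr rfl (fun i _ => ?_)
  cases h : c i <;> simp [seg, G3, h]

def routeOpt (k : ℕ) (js j : Fin k) : Option (Fin (k - 1)) :=
  if h : (if j.val < js.val then j.val else j.val - 1) < k - 1 then some ⟨_, h⟩ else none

lemma routeOpt_eq {k : ℕ} {js j : Fin k} (h : j ≠ js) :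
    ∃ r : Fin (k - 1), routeOpt k js j = some r ∧
      r.val = if j.val < js.val then j.val else j.val - 1 := by
  have h1 := j.isLt; have h2 := js.isLt
  have h3 : j.val ≠ js.val := fun e => h (Fin.ext e)
  have hcond : (if j.val < js.val then j.val else j.val - 1) < k - 1 := by split <;> omega
  exact ⟨⟨_, hcond⟩, by rw [routeOpt, dif_pos hcond], rfl⟩

lemma routeOpt_inj {k : ℕ} {js j j' : Fin k} (h : j ≠ js) (h' : j' ≠ js)
    (he : routeOpt k js j = routeOpt k js j') : j = j' := by
  obtain ⟨r, hr, hrv⟩ := routeOpt_eq h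
  obtain ⟨r', hr', hrv'⟩ := routeOpt_eq h'
  rw [hr, hr'] at he
  have : r = r' := Option.some.inj he
  have hv : r.val = r'.val := congrArg Fin.val this
  rw [hrv, hrv'] at hv
  have h3 : j.val ≠ js.val := fun e => h (Fin.ext e)
  have h3' : j'.val ≠ js.val := fun e => h' (Fin.ext e)
  have := j.isLt; have := j'.isLt; have := js.isLt
  refine Fin.ext ?_
  split_ifs at hv <;> omega

end Aux2
instance (priority := 2000) g3eBEq (n k : ℕ) : BEq (G3E n k) := instBEqOfDecidableEq

lemma edgeRate_def {V E : Type} [DecidableEq E] {N : Network V E} {s t : V}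
    (F : PathFlow N s t) (e : E) :
    F.edgeRate e = ∑ p ∈ F.f.support, if e ∈ p then F.f p else 0 := rfl

lemma totalRate_def {V E : Type} [DecidableEq E] {N : Network V E} {s t : V}
    (F : PathFlow N s t) :
    F.totalRate = ∑ p ∈ F.f.support, F.f p := rfl

lemma isPath_canon {n k : ℕ} (a : Fin n → ℕ) (c : Fin n → Option (Fin (k - 1))) :
    (G3 n k a).IsPath (Sum.inl 0) (Sum.inl (Fin.last n)) (canon c) := by
  have h := isPath_canonFrom a c n 0 (by omega)
  have h0 : (⟨0, by omega⟩ : Fin (n + 1)) = 0 := Fin.ext rfl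
  rwa [h0] at h

/-- **Reduction correctness for Theorem 2 (strong NP-completeness of Int-Min-Max-Delay).**
With `n = 3k`, `k > 0`, positive integers `a i` summing to `k·b` with `b/4 < a i < b/2`,
there is a feasible integer flow of rate `R = k` from `w₀` to `wₙ` in `G''` with maximum
delay at most `b` if and only if the index set can be partitioned into `k` (non-empty,
pairwise disjoint, covering) classes `A j` with `∑ i ∈ A j, a i = b` for every `j`. -/
theorem g3_flow_iff_three_partition (k b : ℕ) (hk : 0 < k) (a : Fin (3 * k) → ℕ)
    (ha : ∀ i, 0 < a i) (hsum : ∑ i, a i = k * b)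
    (hbound : ∀ i, b < 4 * a i ∧ 2 * a i < b) :
    (∃ F : PathFlow (G3 (3 * k) k a) (Sum.inl 0) (Sum.inl (Fin.last (3 * k))),
        F.IsInteger ∧ F.Feasible k ∧ F.maxDelay ≤ b) ↔
    (∃ A : Fin k → Finset (Fin (3 * k)),
        (∀ j, (A j).Nonempty) ∧
        (∀ j j', j ≠ j' → Disjoint (A j) (A j')) ∧
        (Finset.univ.biUnion A = Finset.univ) ∧
        (∀ j, ∑ i ∈ A j, a i = b)) := by
  have hb0 : 0 < b := by
    have h1 := (hbound ⟨0, by omega⟩).2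
    have h2 := ha ⟨0, by omega⟩
    omega
  have hzero : ((0 : Fin (3 * k + 1)) : ℕ) = 0 := rfl
  constructor
  · -- flow → partition
    rintro ⟨F, hint, ⟨hrate, hcap⟩, hdelay⟩
    have hne0 : (Sum.inl (0 : Fin (3*k+1)) : G3V (3*k) k) ≠ Sum.inl (Fin.last (3*k)) := by
      intro h
      have := congrArg Fin.val (Sum.inl.inj h)
      simp [Fin.last] at this
      omega
    -- every supported path carries rate exactly 1
    have hone : ∀ p ∈ F.f.support, F.f p = 1 := by
      intro p hp
      have hnz : F.f p ≠ 0 := Finsupp.mem_support_iff.mp hp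
      obtain ⟨m, hm⟩ := hint p
      have hpath := F.isPath p hp
      cases p with
      | nil => exact absurd hpath hne0
      | cons e es =>
        have hle : F.f (e :: es) ≤ F.edgeRate e := by
          rw [edgeRate_def]
          have h1 : (if e ∈ (e :: es) then F.f (e :: es) else 0) = F.f (e :: es) :=
            if_pos (List.mem_cons_self (a := e) (l := es))
          rw [← h1]
          exact Finset.single_le_sum (f := fun q => if e ∈ q then F.f q else 0)
            (fun q _ => by
              show (0:ℝ) ≤ if e ∈ q then F.f q else 0
              split; exacts [F.nonneg q, le_rfl]) hp
        have hcap1 : F.edgeRate e ≤ 1 := by simpa [G3] using hcap e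
        have hm1 : (m : ℝ) ≤ 1 := by rw [← hm]; exact le_trans hle hcap1
        have hmle : m ≤ 1 := by exact_mod_cast hm1
        have hmne : m ≠ 0 := by
          intro h0; rw [h0] at hm; simp at hm; exact hnz hm
        have : m = 1 := by omega
        rw [hm, this, Nat.cast_one]
    have hcard : F.f.support.card = k := by
      have hcr : ((F.f.support.card : ℕ) : ℝ) = (k : ℝ) := by
        calc ((F.f.support.card : ℕ) : ℝ) = ∑ _p ∈ F.f.support, (1 : ℝ) := by
              rw [Finset.sum_const, nsmul_eq_mul, mul_one]
          _ = ∑ p ∈ F.f.support, F.f p :=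
              Finset.sum_congr rfl (fun p hp => (hone p hp).symm)
          _ = (k : ℝ) := hrate
      exact_mod_cast hcr
    -- distinct supported paths are edge-disjoint
    have hdisjE : ∀ p ∈ F.f.support, ∀ q ∈ F.f.support, p ≠ q →
        ∀ e, e ∈ p → e ∈ q → False := by
      intro p hp q hq hpq e hep heq
      have hsum2 : (2 : ℝ) ≤ F.edgeRate e := by
        have hsplit : (if e ∈ p then F.f p else 0)
            + ∑ x ∈ F.f.support.erase p, (if e ∈ x then F.f x else 0)
            = ∑ x ∈ F.f.support, (if e ∈ x then F.f x else 0) :=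
          Finset.add_sum_erase F.f.support (fun x => if e ∈ x then F.f x else 0) hp
        have hq' : q ∈ F.f.support.erase p := Finset.mem_erase.mpr ⟨Ne.symm hpq, hq⟩
        have hgq : (1 : ℝ) = (if e ∈ q then F.f q else 0) := by
          rw [if_pos heq, hone q hq]
        have hrest : (1 : ℝ) ≤ ∑ x ∈ F.f.support.erase p, if e ∈ x then F.f x else 0 := by
          rw [hgq]
          exact Finset.single_le_sum (f := fun x => if e ∈ x then F.f x else 0)
            (fun x _ => by
              show (0:ℝ) ≤ if e ∈ x then F.f x else 0
              split; exacts [F.nonneg x, le_rfl]) hq'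
        have hterm : (1 : ℝ) ≤ (if e ∈ p then F.f p else 0) := by
          rw [if_pos hep, hone p hp]
        rw [edgeRate_def, ← hsplit]
        linarith
      have := hcap e
      simp [G3] at this
      exact absurd (le_trans hsum2 (hcap e)) (by norm_num [G3])
    -- choice functions
    have hch : ∀ p : List (G3E (3*k) k), ∃ c : Fin (3*k) → Option (Fin (k-1)),
        p ∈ F.f.support → p = canon c := by
      intro p
      by_cases hp : p ∈ F.f.support
      · obtain ⟨c, hc⟩ := path_struct a p.length p le_rfl 0 (F.isPath p hp)
        refine ⟨c, fun _ => ?_⟩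
        rw [hc]
        show canonFrom c ((0 : Fin (3*k+1)) : ℕ) = canonFrom c 0
        rw [hzero]
      · exact ⟨fun _ => none, fun h => absurd h hp⟩
    choose cf hcf using hch
    -- enumerate the support
    have eqv := Finset.equivFinOfCardEq hcard
    set P : Fin k → List (G3E (3*k) k) := fun j => (eqv.symm j).val with hPdef
    have hP : ∀ j, P j ∈ F.f.support := fun j => (eqv.symm j).2
    have hPinj : ∀ j j', j ≠ j' → P j ≠ P j' := by
      intro j j' hjj h
      exact hjj (by
        have : eqv.symm j = eqv.symm j' := Subtype.ext h
        simpa using congrArg eqv this)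
    have hPsurj : ∀ p ∈ F.f.support, ∃ j, P j = p := by
      intro p hp
      exact ⟨eqv ⟨p, hp⟩, by simp [hPdef]⟩
    set A : Fin k → Finset (Fin (3*k)) :=
      (fun j => Finset.univ.filter (fun i => cf (P j) i = none)) with hAdef
    have hmemA : ∀ j i, i ∈ A j ↔ cf (P j) i = none := by
      intro j i; simp [hAdef]
    have hAdisj : ∀ j j', j ≠ j' → Disjoint (A j) (A j') := by
      intro j j' hjj
      rw [Finset.disjoint_left]
      intro i hij hij'
      have h1 : (Sum.inl i : G3E (3*k) k) ∈ P j := by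
        rw [hcf (P j) (hP j)]; exact mem_canon_inl.mpr ((hmemA j i).mp hij)
      have h2 : (Sum.inl i : G3E (3*k) k) ∈ P j' := by
        rw [hcf (P j') (hP j')]; exact mem_canon_inl.mpr ((hmemA j' i).mp hij')
      exact hdisjE (P j) (hP j) (P j') (hP j') (hPinj j j' hjj) _ h1 h2
    have hAcov : Finset.univ.biUnion A = Finset.univ := by
      ext i
      simp only [Finset.mem_biUnion, Finset.mem_univ, iff_true, true_and]
      by_contra hno
      push_neg at hno
      have hall : ∀ p ∈ F.f.support, cf p i ≠ none := by
        intro p hp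
        obtain ⟨j, rfl⟩ := hPsurj p hp
        exact fun h => (hno j) ((hmemA j i).mpr h)
      have hsuppne : F.f.support.Nonempty := by
        rw [← Finset.card_pos, hcard]; exact hk
      obtain ⟨p0, hp0⟩ := hsuppne
      obtain ⟨r0, hr0⟩ := Option.ne_none_iff_exists'.mp (hall p0 hp0)
      have hmaps : ∀ p ∈ F.f.support,
          (cf p i).getD r0 ∈ (Finset.univ : Finset (Fin (k-1))) :=
        fun _ _ => Finset.mem_univ _
      have hcards : (Finset.univ : Finset (Fin (k-1))).card < F.f.support.card := by
        simp [hcard]; omega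
      obtain ⟨p, hp, q, hq, hpq, hgeq⟩ :=
        Finset.exists_ne_map_eq_of_card_lt_of_maps_to hcards hmaps
      obtain ⟨r, hcpr⟩ := Option.ne_none_iff_exists'.mp (hall p hp)
      obtain ⟨r', hcqr⟩ := Option.ne_none_iff_exists'.mp (hall q hq)
      have hrr : r = r' := by
        rw [hcpr, hcqr] at hgeq; simpa using hgeq
      subst hrr
      have hmp : (Sum.inr (Sum.inl (i, r)) : G3E (3*k) k) ∈ p := by
        rw [hcf p hp]; exact mem_canon_fst.mpr hcpr
      have hmq : (Sum.inr (Sum.inl (i, r)) : G3E (3*k) k) ∈ q := by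
        rw [hcf q hq]; exact mem_canon_fst.mpr hcqr
      exact hdisjE p hp q hq hpq _ hmp hmq
    have hAle : ∀ j, ∑ i ∈ A j, a i ≤ b := by
      intro j
      have h1 : (G3 (3*k) k a).pathDelay (P j) = ∑ i ∈ A j, a i := by
        rw [hcf (P j) (hP j), pathDelay_canon]
      have h2 : (G3 (3*k) k a).pathDelay (P j) ≤ F.maxDelay :=
        Finset.le_sup (hP j)
      omega
    have hAtot : ∑ j : Fin k, (∑ i ∈ A j, a i) = k * b := by
      have := Finset.sum_biUnion (s := (Finset.univ : Finset (Fin k))) (t := A) (f := a)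
        (fun j _ j' _ hjj => hAdisj j j' hjj)
      rw [hAcov] at this
      rw [← this, hsum]
    have hAsum : ∀ j, ∑ i ∈ A j, a i = b := by
      intro j0
      by_contra hne'
      have hlt : ∑ i ∈ A j0, a i < b := lt_of_le_of_ne (hAle j0) hne'
      have : ∑ j : Fin k, (∑ i ∈ A j, a i) < ∑ _j : Fin k, b :=
        Finset.sum_lt_sum (fun j _ => hAle j) ⟨j0, Finset.mem_univ _, hlt⟩
      rw [hAtot, Finset.sum_const, Finset.card_univ, Fintype.card_fin, smul_eq_mul] at this
      omega
    refine ⟨A, ?_, hAdisj, hAcov, hAsum⟩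
    intro j
    by_contra h
    rw [Finset.not_nonempty_iff_eq_empty] at h
    have hbj := hAsum j
    rw [h, Finset.sum_empty] at hbj
    omega
  · -- partition → flow
    rintro ⟨A, hne, hdisj, hcov, hsumA⟩
    have hjex : ∀ i : Fin (3*k), ∃ j, i ∈ A j := by
      intro i
      have : i ∈ Finset.univ.biUnion A := by rw [hcov]; exact Finset.mem_univ i
      simpa [Finset.mem_biUnion] using this
    choose jstar hjstar using hjex
    have hjuniq : ∀ i j, i ∈ A j → j = jstar i := by
      intro i j hij
      by_contra hne'
      exact (Finset.disjoint_left.mp (hdisj j (jstar i) hne') hij) (hjstar i)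
    set cA : Fin k → Fin (3*k) → Option (Fin (k-1)) :=
      (fun j i => if i ∈ A j then none else routeOpt k (jstar i) j) with hcA
    have hnoneiff : ∀ j i, cA j i = none ↔ i ∈ A j := by
      intro j i
      by_cases hij : i ∈ A j
      · simp [hcA, hij]
      · have hjne : j ≠ jstar i := fun e => hij (e ▸ hjstar i)
        obtain ⟨r, hr, _⟩ := routeOpt_eq hjne
        simp [hcA, hij, hr]
    have hsomer : ∀ j i r, cA j i = some r →
        j ≠ jstar i ∧ routeOpt k (jstar i) j = some r := by
      intro j i r h
      by_cases hij : i ∈ A j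
      · simp [hcA, hij] at h
      · have hjne : j ≠ jstar i := fun e => hij (e ▸ hjstar i)
        exact ⟨hjne, by simpa [hcA, hij] using h⟩
    set P : Fin k → List (G3E (3*k) k) := (fun j => canon (cA j)) with hP
    have hPinj : Function.Injective P := by
      intro j j' h
      by_contra hjj
      obtain ⟨i, hi⟩ := hne j
      have h1 : (Sum.inl i : G3E (3*k) k) ∈ P j := mem_canon_inl.mpr ((hnoneiff j i).mpr hi)
      rw [h] at h1
      have h2 : i ∈ A j' := (hnoneiff j' i).mp (mem_canon_inl.mp h1)
      exact (Finset.disjoint_left.mp (hdisj j j' hjj) hi) h2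
    set f : List (G3E (3*k) k) →₀ ℝ := ∑ j : Fin k, Finsupp.single (P j) (1:ℝ) with hf
    have happ : ∀ q, f q = ∑ j : Fin k, (if P j = q then (1:ℝ) else 0) := by
      intro q
      rw [hf, Finsupp.finset_sum_apply]
      exact Finset.sum_congr rfl (fun j _ => Finsupp.single_apply)
    have hfP : ∀ j, f (P j) = 1 := by
      intro j
      rw [happ, Finset.sum_eq_single j
        (fun j' _ hj' => if_neg (fun h => hj' (hPinj h)))
        (fun h => absurd (Finset.mem_univ j) h)]
      exact if_pos rfl
    have hfnn : ∀ q, 0 ≤ f q := by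
      intro q; rw [happ]
      exact Finset.sum_nonneg (fun j _ => by split <;> norm_num)
    have hsupp : f.support = Finset.image P Finset.univ := by
      ext q
      rw [Finsupp.mem_support_iff]
      constructor
      · intro hq
        by_contra hnq
        apply hq
        rw [happ]
        refine Finset.sum_eq_zero (fun j _ => if_neg (fun h => hnq ?_))
        rw [Finset.mem_image]; exact ⟨j, Finset.mem_univ j, h⟩
      · intro hq
        obtain ⟨j, _, rfl⟩ := Finset.mem_image.mp hq
        rw [hfP]; norm_num
    have hu : ∀ e : G3E (3*k) k, ∀ j j', e ∈ P j → e ∈ P j' → j = j' := by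
      intro e j j' hj hj'
      match e with
      | Sum.inl i =>
        have h1 : i ∈ A j := (hnoneiff j i).mp (mem_canon_inl.mp hj)
        have h2 : i ∈ A j' := (hnoneiff j' i).mp (mem_canon_inl.mp hj')
        rw [hjuniq i j h1, hjuniq i j' h2]
      | Sum.inr (Sum.inl (i, r)) =>
        obtain ⟨hne1, hr1⟩ := hsomer j i r (mem_canon_fst.mp hj)
        obtain ⟨hne2, hr2⟩ := hsomer j' i r (mem_canon_fst.mp hj')
        exact routeOpt_inj hne1 hne2 (hr1.trans hr2.symm)
      | Sum.inr (Sum.inr (i, r)) =>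
        obtain ⟨hne1, hr1⟩ := hsomer j i r (mem_canon_snd.mp hj)
        obtain ⟨hne2, hr2⟩ := hsomer j' i r (mem_canon_snd.mp hj')
        exact routeOpt_inj hne1 hne2 (hr1.trans hr2.symm)
    refine ⟨⟨f, hfnn, ?_⟩, ?_, ⟨?_, ?_⟩, ?_⟩
    · -- isPath
      intro p hp
      rw [hsupp, Finset.mem_image] at hp
      obtain ⟨j, _, rfl⟩ := hp
      exact isPath_canon a (cA j)
    · -- integer
      intro q
      refine ⟨(Finset.univ.filter (fun j => P j = q)).card, ?_⟩
      rw [happ, Finset.sum_boole]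
    · -- total rate
      rw [totalRate_def]
      show ∑ p ∈ f.support, f p = (k:ℝ)
      rw [hsupp, Finset.sum_image (fun x _ y _ h => hPinj h)]
      calc ∑ j : Fin k, f (P j) = ∑ _j : Fin k, (1:ℝ) :=
            Finset.sum_congr rfl (fun j _ => hfP j)
        _ = (k:ℝ) := by rw [Finset.sum_const, Finset.card_univ, Fintype.card_fin,
              nsmul_eq_mul, mul_one]
    · -- capacities
      intro e
      rw [edgeRate_def]
      show (∑ p ∈ f.support, if e ∈ p then f p else 0) ≤ ((1:ℕ):ℝ)
      rw [hsupp, Finset.sum_image (fun x _ y _ h => hPinj h)]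
      have hcongr : ∀ j ∈ Finset.univ, (if e ∈ P j then f (P j) else 0)
          = (if e ∈ P j then (1:ℝ) else 0) := by
        intro j _
        by_cases h : e ∈ P j
        · rw [if_pos h, if_pos h, hfP]
        · rw [if_neg h, if_neg h]
      rw [Finset.sum_congr rfl hcongr, Finset.sum_boole]
      have hc1 : (Finset.univ.filter (fun j => e ∈ P j)).card ≤ 1 :=
        Finset.card_le_one.mpr (fun j hj j' hj' => by
          rw [Finset.mem_filter] at hj hj'
          exact hu e j j' hj.2 hj'.2)
      exact_mod_cast hc1
    · -- max delay
      refine Finset.sup_le ?_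
      intro q hq
      rw [hsupp, Finset.mem_image] at hq
      obtain ⟨j, _, rfl⟩ := hq
      have hfilter : Finset.univ.filter (fun i => cA j i = none) = A j := by
        ext i; simp [hnoneiff]
      calc (G3 (3*k) k a).pathDelay (P j)
          = ∑ i ∈ Finset.univ.filter (fun i => cA j i = none), a i := pathDelay_canon a (cA j)
        _ = ∑ i ∈ A j, a i := by rw [hfilter]
        _ = b := hsumA j
        _ ≤ b := le_rfl
end

section
/- Let n ≥ 3 and consider the building-block graph B_n with nodes a_1,…,a_n and b_1,…,b_{n-1}, where for each i ∈ {1,…,n−1} there is an edge (a_i, a_{i+1}) with delay 1 and edges (a_i, b_i), (b_i, a_{i+1}) with delay 0, and all edges have capacity 1. For each j ∈ {1,…,n−1}, let p_j be the a_1–a_n path that uses the delay-1 edge (a_j, a_{j+1}) and the zero-delay routes through b_i for all i ≠ j. Then assigning rate 1/(n−2) to each of the n−1 paths p_1,…,p_{n-1} yields a feasible flow of rate R = (n−1)/(n−2) in which every flow-carrying path has delay exactly 1. -/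
/-- Nodes of the partition-reduction graph `G'`: `Sum.inl i` is `w_i` (`i = 0,…,n`),
`Sum.inr i` is `v_{i+1}` (`i = 0,…,n-1`). -/
abbrev GV (n : ℕ) := Fin (n + 1) ⊕ Fin n

/-- Edges of `G'`: `Sum.inl i` is the direct edge `(w_i, w_{i+1})` of delay `a i`;
`Sum.inr (Sum.inl i)` is `(w_i, v_{i+1})` and `Sum.inr (Sum.inr i)` is `(v_{i+1}, w_{i+1})`,
both of delay `0`. All edges have capacity `1`. -/
abbrev GE (n : ℕ) := Fin n ⊕ (Fin n ⊕ Fin n)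

/-- The graph `G'` reduced from the partition problem. -/
def Gpart (n : ℕ) (a : Fin n → ℕ) : Network (GV n) (GE n) where
  src
    | Sum.inl i => Sum.inl i.castSucc
    | Sum.inr (Sum.inl i) => Sum.inl i.castSucc
    | Sum.inr (Sum.inr i) => Sum.inr i
  dst
    | Sum.inl i => Sum.inl i.succ
    | Sum.inr (Sum.inl i) => Sum.inr i
    | Sum.inr (Sum.inr i) => Sum.inl i.succ
  cap := fun _ => 1
  delay
    | Sum.inl i => a i
    | Sum.inr _ => 0

/-- The building-block graph `B_n` of Fig. 3: spine nodes `a_1,…,a_n`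
(`Sum.inl i` = `a_{i+1}`) and detour nodes `b_1,…,b_{n-1}` (`Sum.inr i` = `b_{i+1}`);
for each of the `n - 1` layers there is a direct edge `(a_i, a_{i+1})` of delay `1` and
a zero-delay two-edge route `(a_i, b_i), (b_i, a_{i+1})`; all edges have capacity `1`. -/
abbrev Bblock (n : ℕ) : Network (GV (n - 1)) (GE (n - 1)) :=
  Gpart (n - 1) (fun _ => 1)

/-- The source `a_1` of `B_n`. -/
abbrev BblockSrc (n : ℕ) : GV (n - 1) := Sum.inl 0

/-- The sink `a_n` of `B_n`. -/
abbrev BblockSink (n : ℕ) : GV (n - 1) := Sum.inl (Fin.last (n - 1))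

/-- The `a_1`–`a_n` path of `B_n` that uses the delay-1 direct edge of layer `j` and the
zero-delay detour route through `b_i` at every other layer `i ≠ j`. -/
def blockPath (m : ℕ) (j : Fin m) : List (GE m) :=
  (List.finRange m).flatMap fun i =>
    if i = j then [Sum.inl i] else [Sum.inr (Sum.inl i), Sum.inr (Sum.inr i)]


section AuxLemmas

variable {V E : Type}

lemma Network.isPath_append (N : Network V E) :
    ∀ (p : List E) {q : List E} {s u t : V},
      N.IsPath s u p → N.IsPath u t q → N.IsPath s t (p ++ q)
  | [], q, s, u, t, hp, hq => by
      simp only [Network.IsPath] at hp; subst hp; simpa using hq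
  | e :: es, q, s, u, t, hp, hq => by
      obtain ⟨h1, h2⟩ := hp
      exact ⟨h1, Network.isPath_append N es h2 hq⟩

lemma Network.isPath_flatMap (N : Network V E) :
    ∀ (m : ℕ) (g : Fin (m+1) → V) (seg : Fin m → List E),
      (∀ i, N.IsPath (g i.castSucc) (g i.succ) (seg i)) →
      N.IsPath (g 0) (g (Fin.last m)) ((List.finRange m).flatMap seg)
  | 0, g, seg, h => by
      simp [Network.IsPath]
  | m + 1, g, seg, h => by
      rw [List.finRange_succ, List.flatMap_cons, List.flatMap_map]
      refine Network.isPath_append N _ (h 0) ?_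
      have := Network.isPath_flatMap N m (fun i => g i.succ) (fun i => seg i.succ)
        (fun i => by have := h i.succ; rw [← Fin.succ_castSucc] at this; exact this)
      simpa [Function.comp] using this

lemma blockPath_isPath (m : ℕ) (j : Fin m) :
    (Gpart m fun _ => 1).IsPath (Sum.inl 0) (Sum.inl (Fin.last m)) (blockPath m j) := by
  exact Network.isPath_flatMap _ m Sum.inl _ fun i => by
    by_cases h : i = j <;> simp [h, Network.IsPath, Gpart]

lemma mem_blockPath_inl {m : ℕ} (i j : Fin m) : Sum.inl i ∈ blockPath m j ↔ i = j := by
  simp only [blockPath, List.mem_flatMap, List.mem_finRange, true_and]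
  constructor
  · rintro ⟨a, h⟩; split at h <;> simp_all
  · rintro rfl; exact ⟨i, by simp⟩

lemma mem_blockPath_inrl {m : ℕ} (i j : Fin m) :
    Sum.inr (Sum.inl i) ∈ blockPath m j ↔ i ≠ j := by
  simp only [blockPath, List.mem_flatMap, List.mem_finRange, true_and]
  constructor
  · rintro ⟨a, h⟩; split at h <;> simp_all
  · intro h; exact ⟨i, by simp [show ¬ (i = j) from h]⟩

lemma mem_blockPath_inrr {m : ℕ} (i j : Fin m) :
    Sum.inr (Sum.inr i) ∈ blockPath m j ↔ i ≠ j := by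
  simp only [blockPath, List.mem_flatMap, List.mem_finRange, true_and]
  constructor
  · rintro ⟨a, h⟩; split at h <;> simp_all
  · intro h; exact ⟨i, by simp [show ¬ (i = j) from h]⟩

lemma blockPath_injective (m : ℕ) : Function.Injective (blockPath m) := by
  intro j j' h
  have : Sum.inl j ∈ blockPath m j' := h ▸ (mem_blockPath_inl j j).mpr rfl
  exact (mem_blockPath_inl j j').mp this

lemma pathDelay_blockPath (m : ℕ) (j : Fin m) :
    (Gpart m fun _ => 1).pathDelay (blockPath m j) = 1 := by
  unfold Network.pathDelay blockPath
  rw [List.map_flatMap]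
  rw [List.flatMap_def, List.sum_flatten, List.map_map]
  rw [← Fin.sum_univ_def]
  have : ∀ i : Fin m, ((if i = j then [Sum.inl i] else
      [Sum.inr (Sum.inl i), Sum.inr (Sum.inr i)]).map (Gpart m fun _ => 1).delay).sum
      = if i = j then 1 else 0 := by
    intro i; by_cases h : i = j <;> simp [h, Gpart]
  simp only [Function.comp_apply]
  rw [Finset.sum_congr rfl fun i _ => this i]
  simp

end AuxLemmas

/-- **Lemma 3, achievability.** For `n ≥ 3`, assigning rate `1/(n-2)` to each of the `n - 1`
paths `p_1,…,p_{n-1}` (where `p_j` uses the unique delay-1 edge of layer `j` and detours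
elsewhere) yields a feasible flow of rate `R = (n-1)/(n-2)` in `B_n` in which every
flow-carrying path has delay exactly `1`. -/
theorem bblock_fractional_flow (n : ℕ) (hn : 3 ≤ n) :
    ∃ F : PathFlow (Bblock n) (BblockSrc n) (BblockSink n),
      (∀ j : Fin (n - 1), F.f (blockPath (n - 1) j) = 1 / ((n : ℝ) - 2)) ∧
      (∀ p, (∀ j : Fin (n - 1), p ≠ blockPath (n - 1) j) → F.f p = 0) ∧
      F.Feasible (((n : ℝ) - 1) / ((n : ℝ) - 2)) ∧
      (∀ p ∈ F.f.support, (Bblock n).pathDelay p = 1) := by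
  have hcast : ((n - 1 : ℕ) : ℝ) = (n : ℝ) - 1 := by
    have h1 : (1:ℕ) ≤ n := by omega
    push_cast [h1]; ring
  have hn3 : (3:ℝ) ≤ (n:ℝ) := by exact_mod_cast hn
  have hpos : (0:ℝ) < (n : ℝ) - 2 := by linarith
  set r : ℝ := 1 / ((n:ℝ) - 2) with hr
  have hrpos : 0 < r := by positivity
  have hinj := blockPath_injective (n - 1)
  set f : List (GE (n-1)) →₀ ℝ :=
    ∑ j : Fin (n-1), Finsupp.single (blockPath (n-1) j) r with hf
  have happly : ∀ p, f p = ∑ j : Fin (n-1), if blockPath (n-1) j = p then r else 0 := by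
    intro p
    rw [hf, Finsupp.finset_sum_apply]
    simp [Finsupp.single_apply]
  have hval : ∀ j, f (blockPath (n-1) j) = r := by
    intro j
    rw [happly]
    simp [hinj.eq_iff]
  have hzero : ∀ p, (∀ j, p ≠ blockPath (n-1) j) → f p = 0 := by
    intro p hp
    rw [happly]
    exact Finset.sum_eq_zero fun j _ => if_neg fun h => hp j h.symm
  have hnn : ∀ p, 0 ≤ f p := by
    intro p
    rw [happly]
    exact Finset.sum_nonneg fun j _ => by positivity
  have hsup : ∀ p ∈ f.support, ∃ j, p = blockPath (n-1) j := by
    intro p hp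
    by_contra h
    push_neg at h
    exact Finsupp.mem_support_iff.mp hp (hzero p h)
  have hsupeq : f.support ⊆ Finset.univ.image (blockPath (n-1)) := by
    intro p hp
    obtain ⟨j, rfl⟩ := hsup p hp
    exact Finset.mem_image_of_mem _ (Finset.mem_univ j)
  have hpath : ∀ p ∈ f.support, (Bblock n).IsPath (BblockSrc n) (BblockSink n) p := by
    intro p hp
    obtain ⟨j, rfl⟩ := hsup p hp
    exact blockPath_isPath (n-1) j
  refine ⟨⟨f, hnn, hpath⟩, hval, hzero, ⟨?_, ?_⟩, ?_⟩
  · -- total rate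
    simp only [PathFlow.totalRate]
    rw [Finset.sum_subset hsupeq (fun p _ hp => Finsupp.notMem_support_iff.mp hp)]
    rw [Finset.sum_image (fun a _ b _ h => hinj h)]
    rw [Finset.sum_congr rfl fun j _ => hval j]
    rw [Finset.sum_const, Finset.card_univ, Fintype.card_fin, nsmul_eq_mul, hcast, hr]
    field_simp
  · -- capacities
    intro e
    simp only [PathFlow.edgeRate]
    have hcap : (((Bblock n).cap e : ℕ) : ℝ) = 1 := by simp [Gpart]
    rw [hcap]
    refine le_trans (Finset.sum_le_sum_of_subset_of_nonneg hsupeq ?_) ?_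
    · intro p _ _
      have := hnn p
      split <;> simp [this]
    · rw [Finset.sum_image (fun a _ b _ h => hinj h)]
      simp only [hval]
      have key : ∀ i : Fin (n-1),
          ∑ j : Fin (n-1), (if i = j then (0:ℝ) else r) ≤ 1 := by
        intro i
        have heq : ∀ j : Fin (n-1), (if i = j then (0:ℝ) else r)
            = r - (if i = j then r else 0) := by
          intro j; by_cases h : i = j <;> simp [h]
        rw [Finset.sum_congr rfl fun j _ => heq j, Finset.sum_sub_distrib,
          Finset.sum_const, Finset.sum_ite_eq, Finset.card_univ, Fintype.card_fin,
          nsmul_eq_mul, hcast]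
        simp only [Finset.mem_univ, if_true]
        have : ((n:ℝ) - 1) * r - r = 1 := by
          rw [hr]; field_simp; ring
        linarith
      rcases e with i | x
      · simp only [mem_blockPath_inl]
        have h1 : ∑ j : Fin (n-1), (if i = j then r else 0) = r := by
          rw [Finset.sum_ite_eq]; simp
        rw [h1, hr, div_le_one hpos]
        linarith
      · rcases x with i | i
        · simp only [mem_blockPath_inrl, ne_eq, ite_not]
          exact key i
        · simp only [mem_blockPath_inrr, ne_eq, ite_not]
          exact key i
  · -- delays
    intro p hp
    obtain ⟨j, rfl⟩ := hsup p hp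
    exact pathDelay_blockPath (n-1) j
end
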